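/- Continuous-time exponential lag synchronization (simplified linear case): consider the drive system x'(t) = −A x(t) + P F(x(t)) + Q F(x(t−τ₁)) + R ∫_{t−τ₂}^t F(x(s)) ds + I₀ and the response system y'(t) with the same right-hand side plus the control u(t) = −K(y(t) − x(t−β)). Suppose F is L_F-Lipschitz, A + K is a matrix with −Λ_p(−(A+K)) − ‖P‖_p L_F > L_F(‖Q‖_p + τ‖R‖_p) > 0, where τ = max(τ₁, τ₂). Then there exist C > 0 and λ > 0 such that ‖y(t) − x(t − β)‖_p ≤ C e^{−λ(t − t₀)} for all t ≥ t₀. -/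

import Mathlib

open Filter Topology

set_option maxHeartbeats 1000000

/-- Continuous-time exponential lag synchronization (simplified linear case):
if the drive system `x' = −Ax + P F(x(t)) + Q F(x(t−τ₁)) + R ∫_{t−τ₂}^t F(x(s)) ds + I₀`
and the response system (same right-hand side in `y` plus the feedback control
`u = −K(y(t) − x(t−β))`) have solutions `x, y`, `F` is `L_F`-Lipschitz, and the
matrix measure `Λ = Λ_p(−(A+K))` satisfies
`−Λ − ‖P‖ L_F > L_F(‖Q‖ + τ‖R‖) > 0` with `τ = max(τ₁, τ₂)`, then the systems
are exponentially lag synchronized: there exist `C > 0`, `λ > 0` with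
`‖y(t) − x(t−β)‖ ≤ C·exp(−λ(t−t₀))` for all `t ≥ t₀`. -/
theorem exponential_lag_synchronization_continuous
    {E : Type*} [NormedAddCommGroup E] [NormedSpace ℝ E] [CompleteSpace E] [Nontrivial E]
    (A P Q R K : E →L[ℝ] E) (I₀ : E) (F : E → E) (LF : ℝ)
    (τ₁ τ₂ β t₀ : ℝ) (hτ₁ : 0 < τ₁) (hτ₂ : 0 < τ₂) (hβ : 0 < β)
    (hF : ∀ u v, ‖F u - F v‖ ≤ LF * ‖u - v‖)
    (x y : ℝ → E) (hx_cont : Continuous x) (hy_cont : Continuous y)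
    (hx_ode : ∀ t, t₀ ≤ t → HasDerivAt x
      (-(A (x t)) + P (F (x t)) + Q (F (x (t - τ₁)))
        + R (∫ s in (t - τ₂)..t, F (x s)) + I₀) t)
    (hy_ode : ∀ t, t₀ ≤ t → HasDerivAt y
      (-(A (y t)) + P (F (y t)) + Q (F (y (t - τ₁)))
        + R (∫ s in (t - τ₂)..t, F (y s)) + I₀
        - K (y t - x (t - β))) t)
    (Λ : ℝ)
    (hΛ : Tendsto (fun s : ℝ => (‖(1 : E →L[ℝ] E) + s • (-(A + K))‖ - 1) / s)
      (nhdsWithin 0 (Set.Ioi 0)) (nhds Λ))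
    (hgap : LF * (‖Q‖ + max τ₁ τ₂ * ‖R‖) < -Λ - ‖P‖ * LF)
    (hpos : 0 < LF * (‖Q‖ + max τ₁ τ₂ * ‖R‖)) :
    ∃ C > 0, ∃ lam > 0, ∀ t, t₀ ≤ t →
      ‖y t - x (t - β)‖ ≤ C * Real.exp (-lam * (t - t₀)) := by
  -- Basic objects
  set T : ℝ := t₀ + β with hT
  set e : ℝ → E := fun t => y t - x (t - β) with he
  set f : ℝ → ℝ := fun t => ‖e t‖ with hfdef
  have he_cont : Continuous e :=
    hy_cont.sub (hx_cont.comp (continuous_id.sub continuous_const))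
  have hf_cont : Continuous f := he_cont.norm
  set τ : ℝ := max τ₁ τ₂ with hτdef
  have hτ : 0 < τ := lt_of_lt_of_le hτ₁ (le_max_left _ _)
  set a : ℝ := -Λ - ‖P‖ * LF with ha
  set b : ℝ := LF * (‖Q‖ + τ * ‖R‖) with hb
  have hba : b < a := hgap
  have hbpos : 0 < b := hpos
  have hQR : 0 ≤ ‖Q‖ + τ * ‖R‖ := by positivity
  have hLF : 0 < LF := by
    rcases lt_or_ge 0 LF with h | h
    · exact h
    · exfalso; nlinarith
  have hFcont : Continuous F := by
    have : LipschitzWith ⟨LF, hLF.le⟩ F := by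
      apply LipschitzWith.of_dist_le_mul
      intro u v
      simp only [dist_eq_norm]
      exact hF u v
    exact this.continuous
  -- choose lam
  obtain ⟨lam, hlam0, hlam⟩ : ∃ l, 0 < l ∧ b * Real.exp (l * τ) + l < a := by
    have hc : Tendsto (fun l : ℝ => b * Real.exp (l * τ) + l) (nhdsWithin 0 (Set.Ioi 0))
        (nhds (b * Real.exp (0 * τ) + 0)) := by
      apply Tendsto.mono_left _ nhdsWithin_le_nhds
      exact (Continuous.tendsto (by continuity) 0)
    rw [zero_mul, Real.exp_zero, mul_one, add_zero] at hc
    have hev : ∀ᶠ l in nhdsWithin (0:ℝ) (Set.Ioi 0), b * Real.exp (l * τ) + l < a :=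
      hc.eventually_lt_const hba
    obtain ⟨l, hl1, hl2⟩ := (hev.and self_mem_nhdsWithin).exists
    exact ⟨l, hl2, hl1⟩
  -- the initial-history bound
  set τ' : ℝ := max τ β with hτ'
  have hτ'0 : 0 < τ' := lt_of_lt_of_le hτ (le_max_left _ _)
  set M : ℝ := sSup (f '' Set.Icc (T - τ') T) with hM
  have hMb : ∀ s ∈ Set.Icc (T - τ') T, f s ≤ M := by
    intro s hs
    exact le_csSup ((isCompact_Icc.image hf_cont).bddAbove) ⟨s, hs, rfl⟩
  have hM0 : 0 ≤ M := le_trans (norm_nonneg _) (hMb T ⟨by linarith, le_refl T⟩)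
  set C : ℝ := M + 1 with hC
  have hC0 : 0 < C := by linarith
  set Bf : ℝ → ℝ := fun t => C * Real.exp (-lam * (t - T)) with hBf
  have hBf_cont : Continuous Bf := by fun_prop
  have hBf_pos : ∀ t, 0 < Bf t := fun t => mul_pos hC0 (Real.exp_pos _)
  -- main barrier claim
  have key : ∀ t, T ≤ t → f t ≤ Bf t := by
    by_contra hcon
    push_neg at hcon
    obtain ⟨t₁, ht₁T, ht₁⟩ := hcon
    set S : Set ℝ := {t : ℝ | T ≤ t ∧ Bf t < f t} with hS
    have hSne : S.Nonempty := ⟨t₁, ht₁T, ht₁⟩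
    have hSbd : BddBelow S := ⟨T, fun s hs => hs.1⟩
    set u : ℝ := sInf S with hu
    have huT : T ≤ u := le_csInf hSne fun s hs => hs.1
    -- u is in the closure of S
    have hucl : u ∈ closure S := csInf_mem_closure hSne hSbd
    have huBf : Bf u ≤ f u := by
      have hclosed : IsClosed {t : ℝ | Bf t ≤ f t} :=
        isClosed_le hBf_cont hf_cont
      have : closure S ⊆ {t : ℝ | Bf t ≤ f t} :=
        closure_minimal (fun s hs => le_of_lt hs.2) hclosed
      exact this hucl
    -- u > T
    have huT' : T < u := by
      rcases eq_or_lt_of_le huT with h | h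
      · exfalso
        have h1 : f u ≤ M := hMb u ⟨by rw [← h]; linarith, le_of_eq h.symm⟩
        have h2 : Bf u = C := by
          rw [hBf, ← h]
          simp
        rw [h2] at huBf
        linarith
      · exact h
    -- f s ≤ Bf s strictly before u (for s ≥ T)
    have hbefore : ∀ s, T ≤ s → s < u → f s ≤ Bf s := by
      intro s hsT hsu
      by_contra h
      push_neg at h
      exact absurd (csInf_le hSbd ⟨hsT, h⟩) (not_le.mpr hsu)
    -- f u ≤ Bf u  by left-continuity
    have hfu_le : f u ≤ Bf u := by
      have hne : (nhdsWithin u (Set.Iio u)).NeBot := inferInstance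
      apply le_of_tendsto_of_tendsto
        ((hf_cont.tendsto u).mono_left (nhdsWithin_le_nhds (s := Set.Iio u)))
        ((hBf_cont.tendsto u).mono_left (nhdsWithin_le_nhds (s := Set.Iio u)))
      filter_upwards [Ioo_mem_nhdsLT_of_mem ⟨huT', le_refl u⟩] with s hs
      exact hbefore s hs.1.le hs.2
    have hfu : f u = Bf u := le_antisymm hfu_le huBf
    -- history bound on [u - τ, u]
    have hhist : ∀ s, u - τ ≤ s → s ≤ u → f s ≤ Bf s := by
      intro s hs1 hs2
      rcases lt_or_ge s T with h | h
      · have hττ' : τ ≤ τ' := le_max_left _ _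
        have h1 : f s ≤ M := hMb s ⟨by linarith, h.le⟩
        have h2 : C ≤ Bf s := by
          have hexp : (1:ℝ) ≤ Real.exp (-lam * (s - T)) := by
            apply Real.one_le_exp
            nlinarith
          calc C = C * 1 := by ring
          _ ≤ C * Real.exp (-lam * (s - T)) := by
            exact mul_le_mul_of_nonneg_left hexp hC0.le
        linarith
      · rcases eq_or_lt_of_le hs2 with h' | h'
        · rw [h', hfu]
        · exact hbefore s h h'
    -- derivative of e at u
    have hut₀ : t₀ ≤ u := by linarith
    have hut₀' : t₀ ≤ u - β := by linarith
    set Fe : ℝ → E := fun s => F (y s) - F (x (s - β)) with hFedef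
    have hFe_cont : Continuous Fe :=
      (hFcont.comp hy_cont).sub
        (hFcont.comp (hx_cont.comp (continuous_id.sub continuous_const)))
    have hFe_bound : ∀ s, ‖Fe s‖ ≤ LF * f s := fun s => hF _ _
    set rest : E := P (Fe u) + Q (Fe (u - τ₁)) + R (∫ s in (u - τ₂)..u, Fe s) with hrest
    set Bop : E →L[ℝ] E := -(A + K) with hBop
    set D : E := Bop (e u) + rest with hD
    have hde : HasDerivAt e D u := by
      have hyd := hy_ode u hut₀
      have hxd0 := hx_ode (u - β) hut₀'
      have h1 : HasDerivAt (fun t : ℝ => t - β) 1 u := (hasDerivAt_id u).sub_const β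
      have hxd : HasDerivAt (fun t : ℝ => x (t - β))
          (-(A (x (u - β))) + P (F (x (u - β))) + Q (F (x (u - β - τ₁)))
            + R (∫ s in (u - β - τ₂)..(u - β), F (x s)) + I₀) u := by
        have h2 := HasDerivAt.scomp (x := u) hxd0 h1
        simpa [Function.comp_def] using h2
      have hsub := hyd.sub hxd
      have hint : (∫ s in (u - β - τ₂)..(u - β), F (x s))
          = ∫ s in (u - τ₂)..u, F (x (s - β)) := by
        rw [intervalIntegral.integral_comp_sub_right (fun s => F (x s)) β]
        congr 1 <;> ring
      have hisub : (∫ s in (u - τ₂)..u, Fe s)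
          = (∫ s in (u - τ₂)..u, F (y s)) - ∫ s in (u - τ₂)..u, F (x (s - β)) := by
        apply intervalIntegral.integral_sub
        · exact (hFcont.comp hy_cont).intervalIntegrable _ _
        · exact (hFcont.comp
            (hx_cont.comp (continuous_id.sub continuous_const))).intervalIntegrable _ _
      have harg : u - β - τ₁ = u - τ₁ - β := by ring
      convert hsub using 1
      · rfl
      rw [hD, hrest, hBop, hisub, hint, harg]
      simp only [hFedef, he, ContinuousLinearMap.neg_apply, ContinuousLinearMap.add_apply,
        map_sub]
      abel
    -- exponential comparison facts
    have hexp_pos := Real.exp_pos (lam * τ)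
    have hhist_exp : ∀ s, u - τ ≤ s → s ≤ u → Bf s ≤ Real.exp (lam * τ) * Bf u := by
      intro s hs1 hs2
      have hBs : Bf s = C * Real.exp (-lam * (s - T)) := rfl
      have hBu : Bf u = C * Real.exp (-lam * (u - T)) := rfl
      have h1 : -lam * (s - T) ≤ lam * τ + -lam * (u - T) := by nlinarith
      have h2 : Real.exp (-lam * (s - T)) ≤ Real.exp (lam * τ) * Real.exp (-lam * (u - T)) := by
        rw [← Real.exp_add]
        exact Real.exp_le_exp.mpr h1
      have h3 := mul_le_mul_of_nonneg_left h2 hC0.le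
      rw [hBs, hBu]
      linarith [h3]
    have hτ₁τ : τ₁ ≤ τ := le_max_left _ _
    have hτ₂τ : τ₂ ≤ τ := le_max_right _ _
    -- integral bound
    have hIb : ‖∫ s in (u - τ₂)..u, Fe s‖ ≤ LF * (τ * (Real.exp (lam * τ) * Bf u)) := by
      have hle : u - τ₂ ≤ u := by linarith
      have hbnd : ∀ s ∈ Set.Icc (u - τ₂) u, ‖Fe s‖ ≤ LF * (Real.exp (lam * τ) * Bf u) := by
        intro s hs
        have h2 : f s ≤ Bf s := hhist s (by linarith [hs.1]) hs.2
        have h3 : Bf s ≤ Real.exp (lam * τ) * Bf u :=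
          hhist_exp s (by linarith [hs.1]) hs.2
        calc ‖Fe s‖ ≤ LF * f s := hFe_bound s
        _ ≤ LF * (Real.exp (lam * τ) * Bf u) :=
            mul_le_mul_of_nonneg_left (h2.trans h3) hLF.le
      calc ‖∫ s in (u - τ₂)..u, Fe s‖ ≤ ∫ s in (u - τ₂)..u, ‖Fe s‖ :=
            intervalIntegral.norm_integral_le_integral_norm hle
      _ ≤ ∫ _ in (u - τ₂)..u, LF * (Real.exp (lam * τ) * Bf u) := by
            apply intervalIntegral.integral_mono_on hle
              (hFe_cont.norm.intervalIntegrable _ _) intervalIntegrable_const hbnd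
      _ = τ₂ * (LF * (Real.exp (lam * τ) * Bf u)) := by
            rw [intervalIntegral.integral_const, smul_eq_mul]
            ring_nf
      _ ≤ LF * (τ * (Real.exp (lam * τ) * Bf u)) := by
            have hY : (0:ℝ) ≤ Real.exp (lam * τ) * Bf u :=
              (mul_pos hexp_pos (hBf_pos u)).le
            have := mul_le_mul_of_nonneg_left
              (mul_le_mul_of_nonneg_right hτ₂τ hY) hLF.le
            nlinarith [this]
    -- the key strict inequality at u
    have hkey : Λ * f u + ‖rest‖ < -lam * Bf u := by
      have h1 : ‖rest‖ ≤ ‖P‖ * ‖Fe u‖ + ‖Q‖ * ‖Fe (u - τ₁)‖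
          + ‖R‖ * ‖∫ s in (u - τ₂)..u, Fe s‖ := by
        rw [hrest]
        refine le_trans (norm_add_le _ _) ?_
        have h2 := norm_add_le (P (Fe u)) (Q (Fe (u - τ₁)))
        have h3 := P.le_opNorm (Fe u)
        have h4 := Q.le_opNorm (Fe (u - τ₁))
        have h5 := R.le_opNorm (∫ s in (u - τ₂)..u, Fe s)
        linarith
      have h2 : ‖Fe u‖ ≤ LF * Bf u := by
        have := hFe_bound u
        rw [hfu] at this
        exact this
      have h3 : ‖Fe (u - τ₁)‖ ≤ LF * (Real.exp (lam * τ) * Bf u) := by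
        have ha1 : f (u - τ₁) ≤ Bf (u - τ₁) := hhist (u - τ₁) (by linarith) (by linarith)
        have ha2 : Bf (u - τ₁) ≤ Real.exp (lam * τ) * Bf u :=
          hhist_exp (u - τ₁) (by linarith) (by linarith)
        calc ‖Fe (u - τ₁)‖ ≤ LF * f (u - τ₁) := hFe_bound (u - τ₁)
        _ ≤ LF * (Real.exp (lam * τ) * Bf u) :=
            mul_le_mul_of_nonneg_left (ha1.trans ha2) hLF.le
      have hrle : ‖rest‖ ≤ ‖P‖ * (LF * Bf u)
          + (b * Real.exp (lam * τ)) * Bf u := by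
        have hb1 : ‖Q‖ * ‖Fe (u - τ₁)‖ ≤ ‖Q‖ * (LF * (Real.exp (lam * τ) * Bf u)) :=
          mul_le_mul_of_nonneg_left h3 (norm_nonneg Q)
        have hb2 : ‖R‖ * ‖∫ s in (u - τ₂)..u, Fe s‖
            ≤ ‖R‖ * (LF * (τ * (Real.exp (lam * τ) * Bf u))) :=
          mul_le_mul_of_nonneg_left hIb (norm_nonneg R)
        have hb3 : ‖P‖ * ‖Fe u‖ ≤ ‖P‖ * (LF * Bf u) :=
          mul_le_mul_of_nonneg_left h2 (norm_nonneg P)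
        have hb4 : ‖Q‖ * (LF * (Real.exp (lam * τ) * Bf u))
            + ‖R‖ * (LF * (τ * (Real.exp (lam * τ) * Bf u)))
            = (b * Real.exp (lam * τ)) * Bf u := by
          rw [hb]; ring
        linarith
      have hfinal : (-a + b * Real.exp (lam * τ)) * Bf u < -lam * Bf u :=
        mul_lt_mul_of_pos_right (by linarith) (hBf_pos u)
      have hΛeq : Λ * f u + ‖P‖ * (LF * Bf u) = -a * Bf u := by
        rw [hfu, ha]; ring
      linarith
    -- choose r strictly between
    set r : ℝ := (Λ * f u + ‖rest‖ + -lam * Bf u) / 2 with hrdef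
    have hr1 : Λ * f u + ‖rest‖ < r := by rw [hrdef]; linarith
    have hr2 : r < -lam * Bf u := by rw [hrdef]; linarith
    -- the comparison function φ and its limit
    set φ : ℝ → ℝ := fun z => ((‖(1 : E →L[ℝ] E) + (z - u) • Bop‖ - 1) / (z - u)) * f u
        + ‖e z - e u - (z - u) • D‖ / (z - u) + ‖rest‖ with hφdef
    have hsub : Tendsto (fun z : ℝ => z - u) (nhdsWithin u (Set.Ioi u))
        (nhdsWithin 0 (Set.Ioi 0)) := by
      apply tendsto_nhdsWithin_of_tendsto_nhds_of_eventually_within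
      · have h1 : Tendsto (fun z : ℝ => z - u) (nhds u) (nhds (u - u)) :=
          (continuous_id.sub continuous_const).tendsto u
        rw [sub_self] at h1
        exact h1.mono_left nhdsWithin_le_nhds
      · filter_upwards [self_mem_nhdsWithin] with z hz
        exact sub_pos.mpr (show u < z from hz)
    have hφ_tendsto : Tendsto φ (nhdsWithin u (Set.Ioi u))
        (nhds (Λ * f u + 0 + ‖rest‖)) := by
      apply Tendsto.add (Tendsto.add ?_ ?_) tendsto_const_nhds
      · exact (hΛ.comp hsub).mul_const (f u)
      · have hlo : (fun z => e z - e u - (z - u) • D) =o[nhds u] fun z => z - u :=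
          hasDerivAt_iff_isLittleO.mp hde
        have hdiv : Tendsto (fun z => ‖e z - e u - (z - u) • D‖ / ‖z - u‖)
            (nhds u) (nhds 0) := hlo.norm_norm.tendsto_div_nhds_zero
        have hdiv' := hdiv.mono_left (nhdsWithin_le_nhds (s := Set.Ioi u))
        apply hdiv'.congr'
        filter_upwards [self_mem_nhdsWithin] with z hz
        rw [Real.norm_eq_abs, abs_of_pos (sub_pos.mpr hz)]
    have hφ_ev : ∀ᶠ z in nhdsWithin u (Set.Ioi u), φ z < r := by
      apply hφ_tendsto.eventually_lt_const
      linarith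
    -- pointwise slope bound
    have hslope_le : ∀ z, u < z → (f z - f u) / (z - u) ≤ φ z := by
      intro z hz
      have hs0 : 0 < z - u := sub_pos.mpr hz
      have hs0' : z - u ≠ 0 := ne_of_gt hs0
      have hdecomp : e z = (e z - e u - (z - u) • D)
          + (((1 : E →L[ℝ] E) + (z - u) • Bop) (e u) + (z - u) • rest) := by
        rw [hD]
        simp only [ContinuousLinearMap.add_apply, ContinuousLinearMap.smul_apply,
          ContinuousLinearMap.one_apply, smul_add]
        abel
      have hn : f z ≤ ‖e z - e u - (z - u) • D‖
          + ‖(1 : E →L[ℝ] E) + (z - u) • Bop‖ * f u + (z - u) * ‖rest‖ := by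
        have h1 := norm_add_le (e z - e u - (z - u) • D)
          (((1 : E →L[ℝ] E) + (z - u) • Bop) (e u) + (z - u) • rest)
        rw [← hdecomp] at h1
        have h2 : ‖(((1 : E →L[ℝ] E) + (z - u) • Bop) (e u) + (z - u) • rest)‖
            ≤ ‖(1 : E →L[ℝ] E) + (z - u) • Bop‖ * ‖e u‖ + (z - u) * ‖rest‖ := by
          refine le_trans (norm_add_le _ _) ?_
          have h3 := ((1 : E →L[ℝ] E) + (z - u) • Bop).le_opNorm (e u)
          have h4 : ‖(z - u) • rest‖ = (z - u) * ‖rest‖ := by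
            rw [norm_smul, Real.norm_eq_abs, abs_of_pos hs0]
          linarith
        exact le_trans h1 (by linarith)
      rw [div_le_iff₀ hs0]
      have hmul : φ z * (z - u) = (‖(1 : E →L[ℝ] E) + (z - u) • Bop‖ - 1) * f u
          + ‖e z - e u - (z - u) • D‖ + ‖rest‖ * (z - u) := by
        rw [hφdef]
        field_simp
      rw [hmul]
      have hfu0 : (0:ℝ) ≤ f u := norm_nonneg _
      nlinarith [hn]
    -- slope of the barrier tends to its derivative
    have hBd : HasDerivAt Bf (-lam * Bf u) u := by
      have h1 : HasDerivAt (fun t : ℝ => -lam * (t - T)) (-lam) u := by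
        have := ((hasDerivAt_id u).sub_const T).const_mul (-lam)
        simpa using this
      have h2 := (h1.exp).const_mul C
      convert h2 using 1
      · rfl
      · rfl
      have hBu : Bf u = C * Real.exp (-lam * (u - T)) := rfl
      rw [hBu]; ring
    have hBslope : Tendsto (fun z => (Bf z - Bf u) / (z - u))
        (nhdsWithin u (Set.Ioi u)) (nhds (-lam * Bf u)) := by
      have h1 := hasDerivAt_iff_tendsto_slope.mp hBd
      have h2 : nhdsWithin u (Set.Ioi u) ≤ nhdsWithin u {u}ᶜ :=
        nhdsWithin_mono u fun z hz => ne_of_gt hz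
      have h3 := h1.mono_left h2
      apply h3.congr
      intro z
      rw [slope_def_field]
    have hBev : ∀ᶠ z in nhdsWithin u (Set.Ioi u), r < (Bf z - Bf u) / (z - u) :=
      Filter.Tendsto.eventually_const_lt hr2 hBslope
    -- frequently points of S just right of u
    have huS : u ∉ S := by
      intro h
      exact absurd hfu (ne_of_gt h.2)
    have hfreq : ∃ᶠ z in nhdsWithin u (Set.Ioi u), Bf z < f z := by
      rw [(nhdsGT_basis u).frequently_iff]
      intro v hv
      obtain ⟨s, hsS, hsv⟩ := exists_lt_of_csInf_lt hSne hv
      have hsu : u ≤ s := csInf_le hSbd hsS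
      have hsu' : u < s := lt_of_le_of_ne hsu (by rintro rfl; exact huS hsS)
      exact ⟨s, ⟨hsu', hsv⟩, hsS.2⟩
    -- contradiction
    obtain ⟨z, hz1, ⟨hz2, hz3⟩, hz4⟩ :=
      (hfreq.and_eventually ((hφ_ev.and hBev).and self_mem_nhdsWithin)).exists
    have hzu : u < z := hz4
    have h5 : (f z - f u) / (z - u) ≤ φ z := hslope_le z hzu
    have h6 : (Bf z - Bf u) / (z - u) < (f z - f u) / (z - u) := by
      apply (div_lt_div_iff_of_pos_right (sub_pos.mpr hzu)).mpr
      have := hz1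
      linarith [hfu]
    exact lt_irrefl _ (((h6.trans_le h5).trans hz2).trans hz3)
  -- final assembly
  refine ⟨C * Real.exp (lam * β), mul_pos hC0 (Real.exp_pos _), lam, hlam0, ?_⟩
  intro t ht
  show f t ≤ _
  rcases le_or_gt T t with h | h
  · have h1 := key t h
    have h2 : Bf t = C * Real.exp (lam * β) * Real.exp (-lam * (t - t₀)) := by
      have h3 : -lam * (t - T) = lam * β + -lam * (t - t₀) := by rw [hT]; ring
      show C * Real.exp (-lam * (t - T)) = _
      rw [h3, Real.exp_add]; ring
    rw [← h2]
    exact h1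
  · have hβτ' : β ≤ τ' := le_max_right _ _
    have hTτ' : T - τ' ≤ t := by
      rw [hT] at *
      linarith
    have h1 : f t ≤ M := hMb t ⟨hTτ', h.le⟩
    have h2 : Real.exp (-lam * β) ≤ Real.exp (-lam * (t - t₀)) := by
      apply Real.exp_le_exp.mpr
      nlinarith [hT]
    have h3 : C * Real.exp (lam * β) * Real.exp (-lam * β) = C := by
      rw [mul_assoc, ← Real.exp_add]
      simp
    have h4 : C * Real.exp (lam * β) * Real.exp (-lam * β)
        ≤ C * Real.exp (lam * β) * Real.exp (-lam * (t - t₀)) := by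
      apply mul_le_mul_of_nonneg_left h2
      positivity
    rw [h3] at h4
    linarith
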